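/- An ortholattice satisfying the condition (a ≡₀ b = 1 implies a = b), where a ≡₀ b := (a'∪b)∩(a∪b'), is distributive, i.e., a ∩ (b∪c) = (a∩b) ∪ (a∩c) holds for all a, b, c, so the ortholattice is a Boolean algebra. -/
import Mathlib


/-- An ortholattice as an algebra ⟨α, ', ∪, ∩⟩ with join `j` and
orthocomplement `c` primitive, and meet defined by De Morgan. -/
structure OrthoLattice (α : Type*) where
  j : α → α → α
  c : α → α
  j_comm : ∀ a b, j a b = j b a
  j_assoc : ∀ a b d, j (j a b) d = j a (j b d)
  c_invol : ∀ a, c (c a) = a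
  j_top : ∀ a b, j a (j b (c b)) = j b (c b)
  absorb : ∀ a b, j a (c (j (c a) (c b))) = a

namespace OrthoLattice

variable {α : Type*}

/-- meet: a ∩ b = (a' ∪ b')' -/
def m (L : OrthoLattice α) (a b : α) : α := L.c (L.j (L.c a) (L.c b))

/-- the unit 1 = a ∪ a' -/
def one (L : OrthoLattice α) (a : α) : α := L.j a (L.c a)

/-- quantum equivalence a ≡ b = (a∩b) ∪ (a'∩b') -/
def equiv (L : OrthoLattice α) (a b : α) : α := L.j (L.m a b) (L.m (L.c a) (L.c b))

/-- classical equivalence a ≡₀ b = (a'∪b) ∩ (a∪b') -/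
def equiv0 (L : OrthoLattice α) (a b : α) : α := L.m (L.j (L.c a) b) (L.j a (L.c b))

/-- Sasaki hook a →₁ b = a' ∪ (a ∩ b) -/
def sasaki (L : OrthoLattice α) (a b : α) : α := L.j (L.c a) (L.m a b)

end OrthoLattice

namespace OrthoLattice

variable {α : Type*} (L : OrthoLattice α)

/-! ### Basic ortholattice lemmas -/

lemma ci (a : α) : L.c (L.c a) = a := L.c_invol a

lemma jc (a b : α) : L.j a b = L.j b a := L.j_comm a b

lemma ja (a b d : α) : L.j (L.j a b) d = L.j a (L.j b d) := L.j_assoc a b d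

lemma cm_eq (a b : α) : L.c (L.m a b) = L.j (L.c a) (L.c b) := by
  show L.c (L.c (L.j (L.c a) (L.c b))) = _
  rw [ci]

lemma cj_eq (a b : α) : L.c (L.j a b) = L.m (L.c a) (L.c b) := by
  show _ = L.c (L.j (L.c (L.c a)) (L.c (L.c b)))
  rw [ci, ci]

lemma mc (a b : α) : L.m a b = L.m b a := by
  show L.c (L.j (L.c a) (L.c b)) = L.c (L.j (L.c b) (L.c a))
  rw [jc]

lemma ma (a b d : α) : L.m (L.m a b) d = L.m a (L.m b d) := by
  show L.c (L.j (L.c (L.c (L.j (L.c a) (L.c b)))) (L.c d))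
      = L.c (L.j (L.c a) (L.c (L.c (L.j (L.c b) (L.c d)))))
  rw [ci, ci, ja]

lemma absorb1 (a b : α) : L.j a (L.m a b) = a := L.absorb a b

lemma absorb2 (a b : α) : L.m a (L.j a b) = a := by
  have h := L.absorb (L.c a) (L.c b)
  rw [ci, ci] at h
  show L.c (L.j (L.c a) (L.c (L.j a b))) = a
  rw [h, ci]

lemma jidem (a : α) : L.j a a = a := by
  nth_rewrite 2 [← absorb2 L a a]
  exact absorb1 L a (L.j a a)

lemma midem (a : α) : L.m a a = a := by
  show L.c (L.j (L.c a) (L.c a)) = a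
  rw [jidem, ci]

/-! ### Order -/

def ole (a b : α) : Prop := L.j a b = b

lemma ole_refl (a : α) : L.ole a a := jidem L a

lemma ole_trans {a b d : α} (h1 : L.ole a b) (h2 : L.ole b d) : L.ole a d := by
  unfold ole at *
  rw [← h2, ← ja, h1]

lemma ole_antisymm {a b : α} (h1 : L.ole a b) (h2 : L.ole b a) : a = b := by
  unfold ole at *
  rw [← h1, jc, h2]

lemma le_j_left (a b : α) : L.ole a (L.j a b) := by
  unfold ole; rw [← ja, jidem]

lemma le_j_right (a b : α) : L.ole b (L.j a b) := by
  unfold ole; rw [jc L a b, ← ja, jidem]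

lemma j_le {a b x : α} (h1 : L.ole a x) (h2 : L.ole b x) : L.ole (L.j a b) x := by
  unfold ole at *
  rw [ja, h2, h1]

lemma m_of_le {a b : α} (h : L.ole a b) : L.m a b = a := by
  unfold ole at h
  rw [← h]
  exact absorb2 L a b

lemma le_of_m {a b : α} (h : L.m a b = a) : L.ole a b := by
  unfold ole
  rw [← h, jc L (L.m a b) b, mc]
  exact absorb1 L b a

lemma m_le_left (a b : α) : L.ole (L.m a b) a := by
  unfold ole
  rw [jc]
  exact absorb1 L a b

lemma m_le_right (a b : α) : L.ole (L.m a b) b := by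
  rw [mc]
  exact m_le_left L b a

lemma c_anti {a b : α} (h : L.ole a b) : L.ole (L.c b) (L.c a) := by
  have hm : L.m a b = a := m_of_le L h
  show L.j (L.c b) (L.c a) = L.c a
  rw [← cm_eq, mc, hm]

lemma le_m {x a b : α} (h1 : L.ole x a) (h2 : L.ole x b) : L.ole x (L.m a b) := by
  have h3 := L.c_anti (L.j_le (L.c_anti h1) (L.c_anti h2))
  rw [ci] at h3
  exact h3

/-! ### Top and bottom -/

lemma le_top (x y : α) : L.ole x (L.one y) := L.j_top x y

lemma one_eq (x y : α) : L.one x = L.one y :=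
  L.ole_antisymm (L.le_top (L.one x) y) (L.le_top (L.one y) x)

lemma bot_le (x y : α) : L.ole (L.c (L.one y)) x := by
  have h := L.c_anti (L.le_top (L.c x) y)
  rwa [ci] at h

lemma m_compl (x y : α) : L.m x (L.c x) = L.c (L.one y) := by
  rw [show L.m x (L.c x) = L.c (L.one (L.c x)) from rfl, one_eq L (L.c x) y]

lemma j_bot (x y : α) : L.j x (L.c (L.one y)) = x := by
  rw [← m_compl L x y]
  exact absorb1 L x (L.c x)

lemma m_top (x y : α) : L.m x (L.one y) = x := by
  rw [one_eq L y x]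
  exact absorb2 L x (L.c x)

lemma m_bot (x y : α) : L.m x (L.c (L.one y)) = L.c (L.one y) := by
  rw [mc]
  exact m_of_le L (L.bot_le x y)

lemma eq_bot {x X : α} (h1 : L.ole x X) (h2 : L.ole x (L.c X)) (y : α) :
    x = L.c (L.one y) := by
  have h3 := L.le_m h1 h2
  rw [m_compl L X y] at h3
  exact L.ole_antisymm h3 (L.bot_le x y)

lemma m_right_comm (a x y : α) : L.m (L.m a x) y = L.m (L.m a y) x := by
  rw [ma, mc L x y, ← ma]

/-! ### The orthomodular law, from the hypothesis -/

def Cm (a b : α) : Prop := a = L.j (L.m a b) (L.m a (L.c b))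

lemma cm_flip {a b : α} (h : L.Cm a b) : L.Cm a (L.c b) := by
  unfold Cm at *
  rw [ci, jc]
  exact h

lemma cm_refl (a : α) : L.Cm a a := by
  unfold Cm
  rw [midem]
  exact (absorb1 L a (L.c a)).symm

lemma cm_of_le {a b : α} (h : L.ole a b) : L.Cm a b := by
  unfold Cm
  rw [m_of_le L h]
  exact (absorb1 L a (L.c b)).symm

lemma j4_comm (p q r s : α) :
    L.j (L.j p q) (L.j r s) = L.j (L.j p r) (L.j q s) := by
  rw [ja, ← ja L q r s, jc L q r, ja L r q s, ← ja L p r (L.j q s)]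

def gam (a b : α) : α :=
  L.m (L.m (L.j a b) (L.j a (L.c b))) (L.m (L.j (L.c a) b) (L.j (L.c a) (L.c b)))

section WithH

variable (hh : ∀ x y : α, L.equiv0 x y = L.one x → x = y)
include hh

lemma om {p q : α} (hle : L.ole p q) : q = L.j p (L.m q (L.c p)) := by
  set t := L.j p (L.m q (L.c p)) with ht
  have hletq : L.ole t q := L.j_le hle (L.m_le_left q (L.c p))
  have e1 : L.j (L.c q) t = L.one q := by
    rw [ht, ← ja, show L.j (L.c q) p = L.c (L.m q (L.c p)) by rw [cm_eq, ci], jc]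
    exact one_eq L (L.m q (L.c p)) q
  have e2 : L.j q (L.c t) = L.one q := by
    have h4 : L.j (L.j t q) (L.c t) = L.j q (L.c t) := by rw [hletq]
    rw [← h4, jc L t q, ja]
    rw [show L.j t (L.c t) = L.one t from rfl]
    rw [show L.j q (L.one t) = L.one t from L.le_top q t]
    exact one_eq L t q
  have heq : L.equiv0 q t = L.one q := by
    show L.m (L.j (L.c q) t) (L.j q (L.c t)) = L.one q
    rw [e1, e2, midem]
  exact hh q t heq

/-! ### Commutation -/





lemma cm_of_ge {a b : α} (h : L.ole b a) : L.Cm a b := by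
  unfold Cm
  rw [mc L a b, m_of_le L h]
  exact om L hh h

lemma cm_symm {a b : α} (hab : L.Cm a b) : L.Cm b a := by
  unfold Cm at *
  set e := L.j (L.m b a) (L.m b (L.c a)) with he
  have hle : L.ole e b := L.j_le (L.m_le_left b a) (L.m_le_left b (L.c a))
  have hom := om L hh hle
  set z := L.m b (L.c e) with hz
  have hca : L.c a = L.m (L.j (L.c a) (L.c b)) (L.j (L.c a) b) := by
    conv_lhs => rw [hab]
    rw [cj_eq, cm_eq, cm_eq, ci]
  have hce : L.c e = L.m (L.j (L.c b) (L.c a)) (L.j (L.c b) a) := by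
    rw [he, cj_eq, cm_eq, cm_eq, ci]
  have hz1 : L.ole z (L.j (L.c a) (L.c b)) := by
    have h1 : L.ole z (L.c e) := L.m_le_right b (L.c e)
    rw [hce] at h1
    have h2 := L.ole_trans h1 (L.m_le_left _ _)
    rwa [jc] at h2
  have hz2 : L.ole z (L.j (L.c a) b) :=
    L.ole_trans (L.m_le_left b (L.c e)) (L.le_j_right (L.c a) b)
  have hz3 : L.ole z (L.c a) := by
    rw [hca]
    exact L.le_m hz1 hz2
  have hz4 : L.ole z e :=
    L.ole_trans (L.le_m (L.m_le_left b (L.c e)) hz3) (L.le_j_right (L.m b a) (L.m b (L.c a)))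
  have hzbot : z = L.c (L.one b) := eq_bot L hz4 (L.m_le_right b (L.c e)) b
  rw [hzbot, j_bot] at hom
  exact hom

lemma cm_c_left {a b : α} (h : L.Cm a b) : L.Cm (L.c a) b :=
  cm_symm L hh (cm_flip L (cm_symm L hh h))

lemma cm_L1 {a b : α} (hc : L.Cm a b) : L.m a (L.j (L.c a) b) = L.m a b := by
  set mm := L.m a (L.j (L.c a) b) with hmm
  have h1 : L.ole (L.m a b) mm :=
    L.le_m (L.m_le_left a b) (L.ole_trans (L.m_le_right a b) (L.le_j_right (L.c a) b))
  have hom := om L hh h1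
  have hca : L.m (L.j (L.c a) b) (L.j (L.c a) (L.c b)) = L.c a := by
    conv_rhs => rw [hc]
    rw [cj_eq, cm_eq, cm_eq, ci, mc]
  have hkey : L.m mm (L.c (L.m a b)) = L.c (L.one a) := by
    rw [hmm, cm_eq, ma, hca]
    exact m_compl L a a
  rw [hkey, j_bot] at hom
  exact hom

lemma cm_FH {a b d : α} (h1 : L.Cm a b) (h2 : L.Cm a d) :
    L.m a (L.j b d) = L.j (L.m a b) (L.m a d) := by
  set dd := L.j (L.m a b) (L.m a d) with hdd
  set mm := L.m a (L.j b d) with hmm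
  have hle : L.ole dd mm := by
    apply L.j_le
    · exact L.le_m (L.m_le_left a b) (L.ole_trans (L.m_le_right a b) (L.le_j_left b d))
    · exact L.le_m (L.m_le_left a d) (L.ole_trans (L.m_le_right a d) (L.le_j_right b d))
  have hom := om L hh hle
  set r := L.m mm (L.c dd) with hr
  have hadd : L.m a (L.c dd) = L.m (L.m a (L.c d)) (L.c b) := by
    rw [hdd, cj_eq, cm_eq, cm_eq, ← ma, cm_L1 L hh (cm_flip L h1), m_right_comm,
      cm_L1 L hh (cm_flip L h2)]
  have hreq : r = L.m (L.m (L.m a (L.c d)) (L.c b)) (L.j b d) := by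
    rw [hr, hmm, m_right_comm, hadd]
  have hr1 : L.ole r (L.c b) := by
    rw [hreq]
    exact L.ole_trans (L.m_le_left _ _) (L.m_le_right _ _)
  have hr2 : L.ole r (L.c d) := by
    rw [hreq]
    exact L.ole_trans (L.m_le_left _ _) (L.ole_trans (L.m_le_left _ _) (L.m_le_right _ _))
  have hr3 : L.ole r (L.j b d) := by
    rw [hreq]
    exact L.m_le_right _ _
  have hr4 : L.ole r (L.c (L.j b d)) := by
    rw [cj_eq]
    exact L.le_m hr1 hr2
  have hrbot : r = L.c (L.one a) := eq_bot L hr3 hr4 a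
  rw [hrbot, j_bot] at hom
  exact hom


lemma cm_join {a b d : α} (h1 : L.Cm a b) (h2 : L.Cm a d) : L.Cm a (L.j b d) := by
  apply cm_symm L hh
  show L.j b d = L.j (L.m (L.j b d) a) (L.m (L.j b d) (L.c a))
  have e1 : L.m (L.j b d) a = L.j (L.m a b) (L.m a d) := by
    rw [mc, cm_FH L hh h1 h2]
  have e2 : L.m (L.j b d) (L.c a) = L.j (L.m (L.c a) b) (L.m (L.c a) d) := by
    rw [mc, cm_FH L hh (cm_c_left L hh h1) (cm_c_left L hh h2)]
  have hb : b = L.j (L.m a b) (L.m (L.c a) b) := by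
    have h3 := cm_symm L hh h1
    unfold Cm at h3
    rw [mc L b a, mc L b (L.c a)] at h3
    exact h3
  have hd : d = L.j (L.m a d) (L.m (L.c a) d) := by
    have h3 := cm_symm L hh h2
    unfold Cm at h3
    rw [mc L d a, mc L d (L.c a)] at h3
    exact h3
  rw [e1, e2, j4_comm, ← hb, ← hd]

lemma cm_meet {a b d : α} (h1 : L.Cm a b) (h2 : L.Cm a d) : L.Cm a (L.m b d) :=
  cm_flip L (cm_join L hh (cm_flip L h1) (cm_flip L h2))

/-! ### The commutator -/


lemma cm_a_gam (a b : α) : L.Cm a (L.gam a b) := by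
  apply cm_meet L hh
  · exact cm_meet L hh (cm_of_le L (L.le_j_left a b)) (cm_of_le L (L.le_j_left a (L.c b)))
  · have h1 : L.Cm (L.c a) (L.m (L.j (L.c a) b) (L.j (L.c a) (L.c b))) :=
      cm_meet L hh (cm_of_le L (L.le_j_left (L.c a) b)) (cm_of_le L (L.le_j_left (L.c a) (L.c b)))
    have h2 := cm_c_left L hh h1
    rwa [ci] at h2

lemma cm_b_gam (a b : α) : L.Cm b (L.gam a b) := by
  have f1 : L.Cm b (L.j a b) := cm_of_le L (L.le_j_right a b)
  have f2 : L.Cm b (L.j a (L.c b)) := by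
    have h1 := cm_c_left L hh (cm_of_le L (L.le_j_right a (L.c b)))
    rwa [ci] at h1
  have f3 : L.Cm b (L.j (L.c a) b) := cm_of_le L (L.le_j_right (L.c a) b)
  have f4 : L.Cm b (L.j (L.c a) (L.c b)) := by
    have h1 := cm_c_left L hh (cm_of_le L (L.le_j_right (L.c a) (L.c b)))
    rwa [ci] at h1
  exact cm_meet L hh (cm_meet L hh f1 f2) (cm_meet L hh f3 f4)

end WithH

lemma gam_le_1 (a b : α) : L.ole (L.gam a b) (L.j a b) :=
  L.ole_trans (L.m_le_left _ _) (L.m_le_left _ _)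

lemma gam_le_2 (a b : α) : L.ole (L.gam a b) (L.j a (L.c b)) :=
  L.ole_trans (L.m_le_left _ _) (L.m_le_right _ _)

lemma gam_le_3 (a b : α) : L.ole (L.gam a b) (L.j (L.c a) b) :=
  L.ole_trans (L.m_le_right _ _) (L.m_le_left _ _)

lemma gam_le_4 (a b : α) : L.ole (L.gam a b) (L.j (L.c a) (L.c b)) :=
  L.ole_trans (L.m_le_right _ _) (L.m_le_right _ _)

lemma mbot_ab (a b : α) : L.m (L.m a b) (L.gam a b) = L.c (L.one a) := by
  refine eq_bot L (L.m_le_left _ _) ?_ a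
  rw [cm_eq]
  exact L.ole_trans (L.m_le_right _ _) (gam_le_4 L a b)

lemma mbot_a'b' (a b : α) : L.m (L.m (L.c a) (L.c b)) (L.gam a b) = L.c (L.one a) := by
  refine eq_bot L (L.m_le_left _ _) ?_ a
  rw [cm_eq, ci, ci]
  exact L.ole_trans (L.m_le_right _ _) (gam_le_1 L a b)

lemma gam_ca (a b : α) : L.gam (L.c a) b = L.gam a b := by
  show L.m (L.m (L.j (L.c a) b) (L.j (L.c a) (L.c b)))
        (L.m (L.j (L.c (L.c a)) b) (L.j (L.c (L.c a)) (L.c b))) = _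
  rw [ci, mc]
  rfl

lemma gam_cb (a b : α) : L.gam a (L.c b) = L.gam a b := by
  show L.m (L.m (L.j a (L.c b)) (L.j a (L.c (L.c b))))
        (L.m (L.j (L.c a) (L.c b)) (L.j (L.c a) (L.c (L.c b)))) = _
  rw [ci, mc L (L.j a (L.c b)) (L.j a b), mc L (L.j (L.c a) (L.c b)) (L.j (L.c a) b)]
  rfl

section WithH2

variable (hh : ∀ x y : α, L.equiv0 x y = L.one x → x = y)
include hh

/-- The key step: `b ∩ γ(a,b) ≤ a'`, forced by the hypothesis. -/
lemma key (a b : α) : L.ole (L.m b (L.gam a b)) (L.c a) := by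
  set g := L.gam a b with hg
  set w := L.m b g with hw
  set v := L.j (L.m (L.c a) (L.c w)) w with hv
  have Cga : L.Cm g a := cm_symm L hh (cm_a_gam L hh a b)
  have Cgb : L.Cm g b := cm_symm L hh (cm_b_gam L hh a b)
  have Cgg : L.Cm g g := cm_refl L g
  have Cgw : L.Cm g w := cm_meet L hh Cgb Cgg
  have Cgca : L.Cm g (L.c a) := cm_flip L Cga
  have Cgcw : L.Cm g (L.c w) := cm_flip L Cgw
  have Cgcb : L.Cm g (L.c b) := cm_flip L Cgb
  have Cgcg : L.Cm g (L.c g) := cm_flip L Cgg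
  have Cgp : L.Cm g (L.m (L.c a) (L.c w)) := cm_meet L hh Cgca Cgcw
  have Cgv : L.Cm g v := cm_join L hh Cgp Cgw
  have Cgav : L.Cm g (L.m a v) := cm_meet L hh Cga Cgv
  have Cavg : L.Cm (L.m a v) g := cm_symm L hh Cgav
  have hgw : L.m g w = w := by
    rw [hw, mc L b g, ← ma, midem]
  have hcw : L.c w = L.j (L.c b) (L.c g) := by
    rw [hw, cm_eq]
  have hvg : L.m v g = w := by
    rw [mc, hv, cm_FH L hh Cgp Cgw, hgw]
    have e2 : L.m g (L.m (L.c a) (L.c w)) = L.c (L.one a) := by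
      rw [hcw, ← ma, mc L g (L.c a), ma, cm_FH L hh Cgcb Cgcg, m_compl L g a, j_bot,
        mc L g (L.c b), ← ma]
      rw [hg]
      exact mbot_a'b' L a b
    rw [e2, jc, j_bot]
  have T1 : L.m (L.m a v) g = L.c (L.one a) := by
    rw [ma, hvg, hw, ← ma, hg]
    exact mbot_ab L a b
  have hvg' : L.m v (L.c g) = L.m (L.c a) (L.c g) := by
    have Cg'p : L.Cm (L.c g) (L.m (L.c a) (L.c w)) := cm_c_left L hh Cgp
    have Cg'w : L.Cm (L.c g) w := cm_c_left L hh Cgw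
    rw [mc, hv, cm_FH L hh Cg'p Cg'w]
    have e1 : L.m (L.c g) w = L.c (L.one a) := by
      rw [hw, mc L b g, ← ma, mc L (L.c g) g, m_compl L g a, mc]
      exact m_bot L b a
    have e2 : L.m (L.c g) (L.m (L.c a) (L.c w)) = L.m (L.c a) (L.c g) := by
      rw [← ma, mc L (L.c g) (L.c a), ma, ← cj_eq, hw, mc L b g, absorb1]
    rw [e1, e2, j_bot]
  have T2 : L.m (L.m a v) (L.c g) = L.c (L.one a) := by
    rw [ma, hvg', ← ma, m_compl L a a, mc]
    exact m_bot L (L.c g) a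
  have hav : L.m a v = L.c (L.one a) := by
    have h5 : L.m a v = L.j (L.m (L.m a v) g) (L.m (L.m a v) (L.c g)) := Cavg
    rw [h5, T1, T2, jidem]
  have heq : L.equiv0 (L.c a) v = L.one (L.c a) := by
    show L.m (L.j (L.c (L.c a)) v) (L.j (L.c a) (L.c v)) = L.one (L.c a)
    rw [ci]
    have e1 : L.j a v = L.one (L.c a) := by
      rw [hv, jc L (L.m (L.c a) (L.c w)) w, ← ja, ← cj_eq]
      exact one_eq L (L.j a w) (L.c a)
    have e2 : L.j (L.c a) (L.c v) = L.one (L.c a) := by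
      rw [← cm_eq, hav, ci]
      exact one_eq L a (L.c a)
    rw [e1, e2, midem]
  have hfin := hh (L.c a) v heq
  rw [hfin]
  exact L.le_j_right _ _

lemma wbot (a b : α) : L.m b (L.gam a b) = L.c (L.one a) := by
  have k1 := key L hh a b
  have k2 := key L hh (L.c a) b
  rw [gam_ca, ci] at k2
  exact eq_bot L k2 k1 a

lemma gam_bot (a b : α) : L.gam a b = L.c (L.one a) := by
  have Cgb : L.Cm (L.gam a b) b := cm_symm L hh (cm_b_gam L hh a b)
  have Cgcb : L.Cm (L.gam a b) (L.c b) := cm_flip L Cgb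
  have h1 : L.gam a b = L.m (L.gam a b) (L.one b) := (m_top L _ b).symm
  rw [show L.one b = L.j b (L.c b) from rfl, cm_FH L hh Cgb Cgcb] at h1
  have e1 : L.m (L.gam a b) b = L.c (L.one a) := by
    rw [mc]
    exact wbot L hh a b
  have e2 : L.m (L.gam a b) (L.c b) = L.c (L.one a) := by
    rw [mc, ← gam_cb]
    exact wbot L hh a (L.c b)
  rw [e1, e2, jidem] at h1
  exact h1

lemma cm_all (a b : α) : L.Cm a b := by
  set z := L.j (L.m a b) (L.m a (L.c b)) with hz
  have hle : L.ole z a := L.j_le (L.m_le_left a b) (L.m_le_left a (L.c b))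
  have hom := om L hh hle
  have hcz : L.c z = L.m (L.j (L.c a) (L.c b)) (L.j (L.c a) b) := by
    rw [hz, cj_eq, cm_eq, cm_eq, ci]
  have hx := L.m_le_right a (L.c z)
  have ha1 : L.ole (L.m a (L.c z)) (L.j a b) :=
    L.ole_trans (L.m_le_left a (L.c z)) (L.le_j_left a b)
  have ha2 : L.ole (L.m a (L.c z)) (L.j a (L.c b)) :=
    L.ole_trans (L.m_le_left a (L.c z)) (L.le_j_left a (L.c b))
  have ha3 : L.ole (L.m a (L.c z)) (L.j (L.c a) b) := by
    refine L.ole_trans hx ?_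
    rw [hcz]
    exact L.m_le_right _ _
  have ha4 : L.ole (L.m a (L.c z)) (L.j (L.c a) (L.c b)) := by
    refine L.ole_trans hx ?_
    rw [hcz]
    exact L.m_le_left _ _
  have h1 : L.ole (L.m a (L.c z)) (L.gam a b) :=
    L.le_m (L.le_m ha1 ha2) (L.le_m ha3 ha4)
  have h2 : L.m a (L.c z) = L.c (L.one a) := by
    rw [gam_bot L hh a b] at h1
    exact L.ole_antisymm h1 (L.bot_le _ a)
  rw [h2, j_bot] at hom
  exact hom

end WithH2

end OrthoLattice

/-- an ortholattice with (a ≡₀ b = 1 ⟹ a = b) is distributive,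
i.e. a Boolean algebra. -/
theorem stmt4 {α : Type*} (L : OrthoLattice α)
    (h : ∀ a b : α, L.equiv0 a b = L.one a → a = b) :
    ∀ a b d : α, L.m a (L.j b d) = L.j (L.m a b) (L.m a d) := by
  intro a b d
  exact OrthoLattice.cm_FH L h (OrthoLattice.cm_all L h a b) (OrthoLattice.cm_all L h a d)
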